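/- Let (X, μ) be a finite measure space, w : X → (0,∞) integrable, and a > 0. The density f_opt(x) := w(x)^(1/(a+1)) / ∫ w^(1/(a+1)) dμ is the unique minimizer of the functional f ↦ ∫ w f^(-a) dμ over all measurable probability densities f > 0 a.e. on X, and its minimal value equals (∫ w^(1/(a+1)) dμ)^(a+1). -/

import Mathlib

open MeasureTheory Filter

/-- Equality case of two-point weighted AM-GM. -/
lemma young_eq_aux {u v t : ℝ} (hu : 0 ≤ u) (hv : 0 < v) (ht : 0 < t) (ht1 : t < 1)
    (heq : u ^ t * v ^ (1 - t) = t * u + (1 - t) * v) : u = v := by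
  set x := u / v with hxdef
  have hx0 : 0 ≤ x := div_nonneg hu hv.le
  have hu' : u = x * v := by rw [hxdef, div_mul_cancel₀ u hv.ne']
  have key : x ^ t = t * x + (1 - t) := by
    have h1 : u ^ t * v ^ (1 - t) = x ^ t * v := by
      rw [hu', Real.mul_rpow hx0 hv.le, mul_assoc, ← Real.rpow_add hv]
      norm_num
    have h2 : t * u + (1 - t) * v = (t * x + (1 - t)) * v := by rw [hu']; ring
    rw [h1, h2] at heq
    exact mul_right_cancel₀ hv.ne' heq
  by_contra hne
  have hxne : x ≠ 1 := by
    intro h; exact hne (by rw [hu', h, one_mul])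
  have hrt : x = (x ^ t) ^ (1 / t) := by
    rw [← Real.rpow_mul hx0, mul_one_div, div_self ht.ne', Real.rpow_one]
  have hs : x ^ t - 1 ≠ 0 := by
    intro h
    apply hxne
    have hxt1 : x ^ t = 1 := by linarith
    rw [hrt, hxt1, Real.one_rpow]
  have hp : 1 < 1 / t := by rw [lt_div_iff₀ ht]; linarith
  have hxt0 : 0 ≤ x ^ t := Real.rpow_nonneg hx0 t
  have bern := one_add_mul_self_lt_rpow_one_add (by linarith : (-1:ℝ) ≤ x ^ t - 1) hs hp
  rw [show 1 + (x ^ t - 1) = x ^ t by ring, ← hrt] at bern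
  have : t * (1 + 1 / t * (x ^ t - 1)) < t * x := (mul_lt_mul_iff_right₀ ht).mpr bern
  rw [mul_add, mul_one, ← mul_assoc, mul_one_div, div_self ht.ne', one_mul] at this
  linarith

lemma key_ineq {X : Type*} [MeasurableSpace X] {μ : Measure X} [IsFiniteMeasure μ]
    (hμ : μ ≠ 0) {w f : X → ℝ} (hw_pos : ∀ x, 0 < w x)
    {a : ℝ} (ha : 0 < a) (hf_pos : ∀ᵐ x ∂μ, 0 < f x)
    (hf_one : ∫ x, f x ∂μ = 1)
    (hwt_int : Integrable (fun x => w x ^ (1/(a+1))) μ)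
    (hg_int : Integrable (fun x => w x * f x ^ (-a)) μ) :
    (∫ x, w x ^ (1/(a+1)) ∂μ) ^ (a+1) ≤ ∫ x, w x * f x ^ (-a) ∂μ ∧
    (∫ x, w x * f x ^ (-a) ∂μ = (∫ x, w x ^ (1/(a+1)) ∂μ) ^ (a+1) →
      f =ᵐ[μ] fun x => w x ^ (1/(a+1)) / ∫ y, w y ^ (1/(a+1)) ∂μ) := by
  set t := 1/(a+1) with htdef
  have ha1 : (0:ℝ) < a + 1 := by linarith
  have ht0 : 0 < t := by positivity
  have ht1 : t < 1 := by rw [htdef, div_lt_one ha1]; linarith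
  have hts : t * (a+1) = 1 := by rw [htdef]; field_simp
  have hts' : (a+1) * t = 1 := by rw [mul_comm]; exact hts
  set J := ∫ x, w x ^ t ∂μ with hJdef
  set g := fun x => w x * f x ^ (-a) with hgdef
  set I := ∫ x, g x ∂μ with hIdef
  have hf_int : Integrable f μ := by
    by_contra h
    rw [integral_undef h] at hf_one; norm_num at hf_one
  have hJpos : 0 < J := by
    rw [hJdef,
      integral_pos_iff_support_of_nonneg (fun x => Real.rpow_nonneg (hw_pos x).le t) hwt_int]
    have hsupp : (Function.support fun x => w x ^ t) = Set.univ :=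
      Set.eq_univ_of_forall fun x => (Real.rpow_pos_of_pos (hw_pos x) t).ne'
    rw [hsupp]
    exact Measure.measure_univ_pos.mpr hμ
  have hg_pos : ∀ᵐ x ∂μ, 0 < g x := by
    filter_upwards [hf_pos] with x hx
    exact mul_pos (hw_pos x) (Real.rpow_pos_of_pos hx _)
  have hIpos : 0 < I := by
    rw [hIdef, integral_pos_iff_support_of_nonneg_ae (hg_pos.mono fun x hx => hx.le) hg_int]
    by_contra h
    push_neg at h
    have h0 : μ (Function.support g) = 0 := le_antisymm h zero_le
    have h1 : μ {x | ¬ 0 < g x} = 0 := ae_iff.mp hg_pos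
    have h3 : μ (Function.support g)ᶜ ≤ μ {x | ¬ 0 < g x} := by
      apply measure_mono
      intro x hx
      simp only [Set.mem_compl_iff, Function.mem_support, not_not] at hx
      simp [hx]
    have h4 := measure_univ_le_add_compl (μ := μ) (Function.support g)
    have h5 := Measure.measure_univ_pos.mpr hμ
    rw [h0, zero_add] at h4
    have : μ Set.univ = 0 := le_antisymm (h4.trans (h3.trans_eq h1)) zero_le
    rw [this] at h5; exact lt_irrefl _ h5
  have hIt : 0 < I ^ t := Real.rpow_pos_of_pos hIpos t
  have hpt : ∀ᵐ x ∂μ, (g x / I) ^ t * f x ^ (1 - t) = w x ^ t / I ^ t := by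
    filter_upwards [hf_pos] with x hx
    have hgx : 0 ≤ g x := (mul_pos (hw_pos x) (Real.rpow_pos_of_pos hx _)).le
    rw [Real.div_rpow hgx hIpos.le, div_mul_eq_mul_div]
    congr 1
    show (w x * f x ^ (-a)) ^ t * f x ^ (1 - t) = w x ^ t
    rw [Real.mul_rpow (hw_pos x).le (Real.rpow_nonneg hx.le _),
      ← Real.rpow_mul hx.le, mul_assoc, ← Real.rpow_add hx,
      show -a * t + (1 - t) = 0 by rw [htdef]; field_simp; ring,
      Real.rpow_zero, mul_one]
  set φ := fun x => t * (g x / I) + (1 - t) * f x - w x ^ t / I ^ t with hφdef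
  have hφ_nonneg : ∀ᵐ x ∂μ, 0 ≤ φ x := by
    filter_upwards [hf_pos, hpt] with x hx hptx
    have hgx : 0 ≤ g x / I :=
      div_nonneg (mul_pos (hw_pos x) (Real.rpow_pos_of_pos hx _)).le hIpos.le
    have hyoung := Real.geom_mean_le_arith_mean2_weighted ht0.le
      (by linarith : (0:ℝ) ≤ 1 - t) hgx hx.le (by ring : t + (1 - t) = 1)
    rw [hptx] at hyoung
    simp only [hφdef]
    linarith
  have hφ_int : Integrable φ μ :=
    (((hg_int.div_const I).const_mul t).add (hf_int.const_mul (1 - t))).sub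
      (hwt_int.div_const (I ^ t))
  have hint1 : Integrable (fun x => t * (g x / I)) μ := (hg_int.div_const I).const_mul t
  have hint2 : Integrable (fun x => (1 - t) * f x) μ := hf_int.const_mul (1 - t)
  have hint3 : Integrable (fun x => t * (g x / I) + (1 - t) * f x) μ := hint1.add hint2
  have hint4 : Integrable (fun x => w x ^ t / I ^ t) μ := hwt_int.div_const _
  have hφ_integral : ∫ x, φ x ∂μ = 1 - J / I ^ t := by
    calc ∫ x, φ x ∂μ
        = (∫ x, t * (g x / I) + (1 - t) * f x ∂μ) - ∫ x, w x ^ t / I ^ t ∂μ :=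
          integral_sub hint3 hint4
      _ = ((∫ x, t * (g x / I) ∂μ) + ∫ x, (1 - t) * f x ∂μ) - ∫ x, w x ^ t / I ^ t ∂μ := by
          rw [integral_add hint1 hint2]
      _ = (t * ((∫ x, g x ∂μ) / I) + (1 - t) * ∫ x, f x ∂μ) - (∫ x, w x ^ t ∂μ) / I ^ t := by
          rw [integral_const_mul, integral_const_mul, integral_div, integral_div]
      _ = 1 - J / I ^ t := by
          rw [hf_one, ← hIdef, ← hJdef, div_self hIpos.ne']; ring
  have hineq : J ≤ I ^ t := by
    have h0 : 0 ≤ ∫ x, φ x ∂μ := integral_nonneg_of_ae hφ_nonneg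
    rw [hφ_integral] at h0
    have : J / I ^ t ≤ 1 := by linarith
    rwa [div_le_one hIt] at this
  have hIt_eq : (I ^ t) ^ (a + 1) = I := by
    rw [← Real.rpow_mul hIpos.le, hts, Real.rpow_one]
  constructor
  · calc J ^ (a+1) ≤ (I ^ t) ^ (a+1) := Real.rpow_le_rpow hJpos.le hineq ha1.le
      _ = I := hIt_eq
  · intro hEq
    have hItJ : I ^ t = J := by
      rw [hEq, ← Real.rpow_mul hJpos.le, hts', Real.rpow_one]
    have hφ0 : ∫ x, φ x ∂μ = 0 := by
      rw [hφ_integral, hItJ, div_self hJpos.ne']; ring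
    have hφae : φ =ᵐ[μ] 0 := (integral_eq_zero_iff_of_nonneg_ae hφ_nonneg hφ_int).mp hφ0
    filter_upwards [hf_pos, hpt, hφae] with x hx hptx hφx
    simp only [hφdef, Pi.zero_apply] at hφx
    have heqx : (g x / I) ^ t * f x ^ (1 - t) = t * (g x / I) + (1 - t) * f x := by
      rw [hptx]; linarith
    have huv := young_eq_aux
      (div_nonneg (mul_pos (hw_pos x) (Real.rpow_pos_of_pos hx _)).le hIpos.le)
      hx ht0 ht1 heqx
    rw [div_eq_iff hIpos.ne'] at huv
    have hw_eq : w x = I * f x ^ (a + 1) := by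
      have h1 : w x * f x ^ (-a) * f x ^ a = (f x * I) * f x ^ a := by
        rw [← huv]
      rw [mul_assoc, ← Real.rpow_add hx, neg_add_cancel, Real.rpow_zero, mul_one] at h1
      rw [h1, show a + 1 = 1 + a by ring, Real.rpow_add hx, Real.rpow_one]
      ring
    show f x = w x ^ t / J
    have hwt : w x ^ t = J * f x := by
      rw [hw_eq, Real.mul_rpow hIpos.le (Real.rpow_nonneg hx.le _), hItJ,
        ← Real.rpow_mul hx.le, hts', Real.rpow_one]
    rw [hwt, mul_comm, mul_div_assoc, div_self hJpos.ne', mul_one]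
theorem stmt_2 {X : Type*} [MeasurableSpace X] (μ : Measure X) [IsFiniteMeasure μ]
    (hμ : μ ≠ 0) (w : X → ℝ) (hw_meas : Measurable w) (hw_pos : ∀ x, 0 < w x)
    (hw_int : Integrable w μ) (a : ℝ) (ha : 0 < a)
    (fopt : X → ℝ)
    (hfopt : fopt = fun x => w x ^ (1 / (a + 1)) / ∫ y, w y ^ (1 / (a + 1)) ∂μ) :
    -- fopt is a probability density
    ((∀ᵐ x ∂μ, 0 < fopt x) ∧ ∫ x, fopt x ∂μ = 1) ∧
    -- its value is the optimal one
    (∫⁻ x, ENNReal.ofReal (w x * fopt x ^ (-a)) ∂μ =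
      ENNReal.ofReal ((∫ x, w x ^ (1 / (a + 1)) ∂μ) ^ (a + 1))) ∧
    -- it minimizes the functional over all probability densities
    (∀ f : X → ℝ, Measurable f → (∀ᵐ x ∂μ, 0 < f x) → ∫ x, f x ∂μ = 1 →
      ∫⁻ x, ENNReal.ofReal (w x * fopt x ^ (-a)) ∂μ ≤
        ∫⁻ x, ENNReal.ofReal (w x * f x ^ (-a)) ∂μ) ∧
    -- and it is the unique minimizer (up to a.e. equality)
    (∀ f : X → ℝ, Measurable f → (∀ᵐ x ∂μ, 0 < f x) → ∫ x, f x ∂μ = 1 →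
      ∫⁻ x, ENNReal.ofReal (w x * f x ^ (-a)) ∂μ =
        ENNReal.ofReal ((∫ x, w x ^ (1 / (a + 1)) ∂μ) ^ (a + 1)) →
      f =ᵐ[μ] fopt) := by
  have ha1 : (0:ℝ) < a + 1 := by linarith
  have hwt_meas : Measurable fun x => w x ^ (1/(a+1)) := by fun_prop
  have hwt_int : Integrable (fun x => w x ^ (1/(a+1))) μ := by
    apply Integrable.mono' ((integrable_const 1).add hw_int) hwt_meas.aestronglyMeasurable
    filter_upwards with x
    simp only [Pi.add_apply, Pi.one_apply]
    rw [Real.norm_of_nonneg (Real.rpow_nonneg (hw_pos x).le _)]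
    rcases le_or_gt (w x) 1 with h | h
    · have h2 : w x ^ (1/(a+1)) ≤ 1 := Real.rpow_le_one (hw_pos x).le h (by positivity)
      linarith [hw_pos x]
    · have h2 : w x ^ (1/(a+1)) ≤ w x ^ (1:ℝ) :=
        Real.rpow_le_rpow_of_exponent_le h.le (by rw [div_le_one ha1]; linarith)
      rw [Real.rpow_one] at h2
      linarith
  set J := ∫ x, w x ^ (1/(a+1)) ∂μ with hJdef
  have hJpos : 0 < J := by
    rw [hJdef, integral_pos_iff_support_of_nonneg
      (fun x => Real.rpow_nonneg (hw_pos x).le _) hwt_int]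
    have hsupp : (Function.support fun x => w x ^ (1/(a+1))) = Set.univ :=
      Set.eq_univ_of_forall fun x => (Real.rpow_pos_of_pos (hw_pos x) _).ne'
    rw [hsupp]
    exact Measure.measure_univ_pos.mpr hμ
  have hfopt_pos : ∀ x, 0 < fopt x := by
    intro x; rw [hfopt]
    exact div_pos (Real.rpow_pos_of_pos (hw_pos x) _) hJpos
  have hint_fopt : ∫ x, fopt x ∂μ = 1 := by
    rw [hfopt, integral_div, ← hJdef, div_self hJpos.ne']
  have hpt : ∀ x, w x * fopt x ^ (-a) = w x ^ (1/(a+1)) * J ^ a := by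
    intro x
    rw [hfopt]
    simp only
    have h1 : (w x ^ (1/(a+1)) / J) ^ (-a) = w x ^ ((1/(a+1)) * (-a)) * J ^ a := by
      rw [Real.div_rpow (Real.rpow_nonneg (hw_pos x).le _) hJpos.le,
        ← Real.rpow_mul (hw_pos x).le, Real.rpow_neg hJpos.le a, div_inv_eq_mul]
    have h2 : w x * w x ^ ((1/(a+1)) * (-a)) = w x ^ (1/(a+1)) := by
      nth_rewrite 1 [← Real.rpow_one (w x)]
      rw [← Real.rpow_add (hw_pos x)]
      congr 1
      field_simp
      ring
    rw [h1, ← mul_assoc, h2]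
  have hval : ∫⁻ x, ENNReal.ofReal (w x * fopt x ^ (-a)) ∂μ = ENNReal.ofReal (J ^ (a+1)) := by
    have hint : Integrable (fun x => w x ^ (1/(a+1)) * J ^ a) μ := hwt_int.mul_const _
    calc ∫⁻ x, ENNReal.ofReal (w x * fopt x ^ (-a)) ∂μ
        = ∫⁻ x, ENNReal.ofReal (w x ^ (1/(a+1)) * J ^ a) ∂μ := by
          apply lintegral_congr; intro x; rw [hpt x]
      _ = ENNReal.ofReal (∫ x, w x ^ (1/(a+1)) * J ^ a ∂μ) :=
          (ofReal_integral_eq_lintegral_ofReal hint (ae_of_all _ fun x =>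
            mul_nonneg (Real.rpow_nonneg (hw_pos x).le _)
              (Real.rpow_nonneg hJpos.le _))).symm
      _ = ENNReal.ofReal (J ^ (a+1)) := by
          rw [integral_mul_const, ← hJdef]
          congr 1
          rw [Real.rpow_add hJpos, Real.rpow_one]
          ring
  refine ⟨⟨ae_of_all _ hfopt_pos, hint_fopt⟩, hval, ?_, ?_⟩
  · intro f hf_meas hf_pos hf_one
    rw [hval]
    by_cases hfin : ∫⁻ x, ENNReal.ofReal (w x * f x ^ (-a)) ∂μ = ⊤
    · rw [hfin]; exact le_top
    · have hg_nonneg : ∀ᵐ x ∂μ, 0 ≤ w x * f x ^ (-a) := hf_pos.mono fun x hx =>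
        (mul_pos (hw_pos x) (Real.rpow_pos_of_pos hx _)).le
      have hg_meas : Measurable fun x => w x * f x ^ (-a) := by fun_prop
      have hg_int : Integrable (fun x => w x * f x ^ (-a)) μ := by
        refine ⟨hg_meas.aestronglyMeasurable, ?_⟩
        rw [hasFiniteIntegral_iff_ofReal hg_nonneg]
        exact lt_top_iff_ne_top.mpr hfin
      rw [← ofReal_integral_eq_lintegral_ofReal hg_int hg_nonneg]
      exact ENNReal.ofReal_le_ofReal
        (key_ineq hμ hw_pos ha hf_pos hf_one hwt_int hg_int).1
  · intro f hf_meas hf_pos hf_one hEq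
    have hg_nonneg : ∀ᵐ x ∂μ, 0 ≤ w x * f x ^ (-a) := hf_pos.mono fun x hx =>
      (mul_pos (hw_pos x) (Real.rpow_pos_of_pos hx _)).le
    have hg_meas : Measurable fun x => w x * f x ^ (-a) := by fun_prop
    have hg_int : Integrable (fun x => w x * f x ^ (-a)) μ := by
      refine ⟨hg_meas.aestronglyMeasurable, ?_⟩
      rw [hasFiniteIntegral_iff_ofReal hg_nonneg]
      rw [hEq]
      exact ENNReal.ofReal_lt_top
    rw [← ofReal_integral_eq_lintegral_ofReal hg_int hg_nonneg] at hEq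
    have hI_nonneg : 0 ≤ ∫ x, w x * f x ^ (-a) ∂μ := integral_nonneg_of_ae hg_nonneg
    have hEq' : ∫ x, w x * f x ^ (-a) ∂μ = J ^ (a+1) := by
      rwa [ENNReal.ofReal_eq_ofReal_iff hI_nonneg (Real.rpow_nonneg hJpos.le _)] at hEq
    have hres := (key_ineq hμ hw_pos ha hf_pos hf_one hwt_int hg_int).2 hEq'
    rw [hfopt]
    exact hres
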